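/- Let (Ω,σ) be a finite measure space with σ(Ω) > 0, let F be a finite-dimensional vector space of real-valued square-integrable functions on Ω containing the constant functions, on which the L²(σ) inner product is positive definite, and let G be the linear span of the products φ₁·φ₂ with φ₁,φ₂ ∈ F. Let Φ be the reproducing kernel of F, and assume the diagonal function ω ↦ Φ(ω,ω) is constant on Ω. If (X,W) is a cubature formula for G with |X| = dim_ℝ F (a tight cubature formula), then the weight is uniform: W(x) = σ(Ω)/|X| for all x ∈ X. -/

import Mathlib

open MeasureTheory Finset

/-- a tight cubature formula (for the span `G` of products of elements of `F`,
with `|X| = dim F`) has uniform weight `σ(Ω)/|X|`, provided the reproducing kernel of `F`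
is constant on the diagonal. -/
theorem tight_cubature_has_uniform_weight
    {Ω : Type*} [MeasurableSpace Ω] (σ : Measure Ω) [IsFiniteMeasure σ]
    (hσ : 0 < σ Set.univ)
    (F G : Submodule ℝ (Ω → ℝ)) [FiniteDimensional ℝ F]
    (hL2 : ∀ φ ∈ F, MemLp φ 2 σ)
    (hconst : ∀ c : ℝ, (fun _ : Ω => c) ∈ F)
    (hpd : ∀ φ ∈ F, (∀ᵐ ω ∂σ, φ ω = 0) → φ = 0)
    (hG : G = Submodule.span ℝ {f : Ω → ℝ | ∃ φ₁ ∈ F, ∃ φ₂ ∈ F, f = φ₁ * φ₂})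
    (Φ : Ω → Ω → ℝ)
    (hΦmem : ∀ ω : Ω, (fun ω' => Φ ω' ω) ∈ F)
    (hΦrepr : ∀ φ ∈ F, ∀ ω : Ω, ∫ x, φ x * Φ x ω ∂σ = φ ω)
    (hdiag : ∀ ω ω' : Ω, Φ ω ω = Φ ω' ω')
    (X : Finset Ω) (W : Ω → ℝ) (hW : ∀ x ∈ X, 0 < W x)
    (hcub : ∀ φ ∈ G, ∑ x ∈ X, W x * φ x = ∫ ω, φ ω ∂σ)
    (htight : X.card = Module.finrank ℝ F) :
    ∀ x ∈ X, W x = (σ Set.univ).toReal / X.card := by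
  classical
  subst hG
  have hprod : ∀ φ ∈ F, ∀ ψ ∈ F,
      (φ * ψ) ∈ Submodule.span ℝ {f : Ω → ℝ | ∃ φ₁ ∈ F, ∃ φ₂ ∈ F, f = φ₁ * φ₂} :=
    fun φ hφ ψ hψ => Submodule.subset_span ⟨φ, hφ, ψ, hψ, rfl⟩
  -- the evaluation map on X
  let E : F →ₗ[ℝ] ({x // x ∈ X} → ℝ) :=
    LinearMap.pi fun x => (LinearMap.proj (x : Ω)).comp F.subtype
  have hEapp : ∀ (φ : F) (x : {x // x ∈ X}), E φ x = (φ : Ω → ℝ) x := fun _ _ => rfl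
  have hinj : Function.Injective E := by
    rw [injective_iff_map_eq_zero]
    intro φ hφ0
    have hvals : ∀ x ∈ X, (φ : Ω → ℝ) x = 0 := fun x hx => congrFun hφ0 ⟨x, hx⟩
    have h1 : ∑ x ∈ X, W x * ((φ : Ω → ℝ) x * (φ : Ω → ℝ) x)
        = ∫ ω, (φ : Ω → ℝ) ω * (φ : Ω → ℝ) ω ∂σ := by
      have := hcub ((φ : Ω → ℝ) * (φ : Ω → ℝ)) (hprod _ φ.2 _ φ.2)
      simpa [Pi.mul_apply] using this
    have h2 : ∫ ω, (φ : Ω → ℝ) ω * (φ : Ω → ℝ) ω ∂σ = 0 := by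
      rw [← h1]
      exact Finset.sum_eq_zero fun x hx => by rw [hvals x hx]; ring
    have hint : Integrable (fun ω => (φ : Ω → ℝ) ω * (φ : Ω → ℝ) ω) σ := by
      simpa [sq] using (hL2 _ φ.2).integrable_sq
    have hae : ∀ᵐ ω ∂σ, (φ : Ω → ℝ) ω * (φ : Ω → ℝ) ω = 0 := by
      have := (integral_eq_zero_iff_of_nonneg (fun ω => mul_self_nonneg _) hint).mp h2
      filter_upwards [this] with ω hω using hω
    have : (φ : Ω → ℝ) = 0 :=
      hpd _ φ.2 (by filter_upwards [hae] with ω hω using mul_self_eq_zero.mp hω)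
    exact Subtype.ext this
  have hdim : Module.finrank ℝ F = Module.finrank ℝ ({x // x ∈ X} → ℝ) := by
    simp [Module.finrank_pi, Fintype.card_coe, htight]
  have hsurj : Function.Surjective E := by
    intro y
    obtain ⟨x, hx⟩ := (E.linearEquivOfInjective hinj hdim).surjective y
    exact ⟨x, by rw [← E.linearEquivOfInjective_apply hinj hdim]; exact hx⟩
  -- key: W x * Φ x x = 1 for all x ∈ X
  have hkey : ∀ x ∈ X, W x * Φ x x = 1 := by
    intro x₀ hx₀
    obtain ⟨φ, hφ⟩ := hsurj (Pi.single ⟨x₀, hx₀⟩ (1 : ℝ))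
    have hφvals : ∀ x (hx : x ∈ X), (φ : Ω → ℝ) x = if x = x₀ then 1 else 0 := by
      intro x hx
      have := congrFun hφ ⟨x, hx⟩
      rw [hEapp] at this
      rw [this]
      by_cases h : x = x₀
      · subst h; simp
      · rw [Pi.single_apply, if_neg (by simpa using h), if_neg h]
    have hsum : ∑ x ∈ X, W x * ((φ : Ω → ℝ) x * Φ x x₀) = (φ : Ω → ℝ) x₀ := by
      have h1 := hcub ((φ : Ω → ℝ) * (fun ω' => Φ ω' x₀)) (hprod _ φ.2 _ (hΦmem x₀))
      have h2 := hΦrepr _ φ.2 x₀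
      simpa [Pi.mul_apply, h2] using h1
    have hx₀val : (φ : Ω → ℝ) x₀ = 1 := by rw [hφvals x₀ hx₀, if_pos rfl]
    rw [hx₀val] at hsum
    rw [Finset.sum_eq_single_of_mem x₀ hx₀ (fun x hx hne => by
      rw [hφvals x hx, if_neg hne]; ring)] at hsum
    rw [hφvals x₀ hx₀, if_pos rfl, one_mul] at hsum
    exact hsum
  intro x hx
  have hΦne : Φ x x ≠ 0 := by
    intro h; have := hkey x hx; rw [h, mul_zero] at this; exact one_ne_zero this.symm
  -- all weights equal 1 / Φ x x
  have hWeq : ∀ y ∈ X, W y = W x := by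
    intro y hy
    have h1 := hkey y hy
    have h2 := hkey x hx
    rw [hdiag y x] at h1
    exact mul_right_cancel₀ hΦne (h1.trans h2.symm)
  -- sum of weights is total measure
  have hone : ∑ y ∈ X, W y * (1 : ℝ) = (σ Set.univ).toReal := by
    have hmem : (fun _ : Ω => (1 : ℝ)) ∈
        Submodule.span ℝ {f : Ω → ℝ | ∃ φ₁ ∈ F, ∃ φ₂ ∈ F, f = φ₁ * φ₂} := by
      have : (fun _ : Ω => (1 : ℝ)) = (fun _ : Ω => (1 : ℝ)) * (fun _ : Ω => (1 : ℝ)) := by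
        funext ω; simp
      exact this ▸ hprod _ (hconst 1) _ (hconst 1)
    have := hcub _ hmem
    simpa [integral_const, smul_eq_mul, measureReal_def] using this
  have hsum : (X.card : ℝ) * W x = (σ Set.univ).toReal := by
    rw [← hone]
    rw [Finset.sum_congr rfl (fun y hy => by rw [mul_one, hWeq y hy])]
    simp [mul_comm]
  have hcard : (X.card : ℝ) ≠ 0 := by
    simp only [ne_eq, Nat.cast_eq_zero, Finset.card_eq_zero]
    intro h; subst h; exact absurd hx (Finset.notMem_empty x)
  field_simp [hcard] at hsum ⊢
  linarith [hsum]
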